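/- Fix q ∈ (0,1) and δ > 0, and let h(x) = x / (x + (1−x)·exp(δ·(x−q))) for x ∈ [0,1]. Then: (i) h maps [0,1] into [0,1] and its fixed points are exactly {0, q, 1}; (ii) h'(0) = exp(δ·q) > 1 and h'(1) = exp(δ·(1−q)) > 1, so 0 and 1 are repelling fixed points for every δ > 0; (iii) h'(q) = δ·q² − δ·q + 1, so the fixed point q is attracting when δ < 2/(q·(1−q)) and repelling when δ > 2/(q·(1−q)). -/

import Mathlib

open Filter

/-- A fixed point `p` of a map `f` of the unit interval `[0,1]` is *repelling*
if there is an open neighborhood `U` of `p` (relative to `[0,1]`) such that every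
orbit starting in `U \ {p}` eventually leaves `U`. -/
def IsRepellingFixedPt (f : ℝ → ℝ) (p : ℝ) : Prop :=
  ∃ U : Set ℝ, IsOpen U ∧ p ∈ U ∧
    ∀ y ∈ U ∩ Set.Icc (0:ℝ) 1, y ≠ p → ∃ n : ℕ, f^[n] y ∉ U

/-- A fixed point `p` of a map `f` of the unit interval `[0,1]` is *attracting*
if there is an open neighborhood `U` of `p` (relative to `[0,1]`) such that every
orbit starting in `U` converges to `p`. -/
def IsAttractingFixedPt (f : ℝ → ℝ) (p : ℝ) : Prop :=
  ∃ U : Set ℝ, IsOpen U ∧ p ∈ U ∧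
    ∀ y ∈ U ∩ Set.Icc (0:ℝ) 1, Tendsto (fun n : ℕ => f^[n] y) atTop (nhds p)

/-- Pointwise error estimate coming from a derivative at a fixed point. -/
lemma deriv_est (h : ℝ → ℝ) (p d : ℝ) (hd : HasDerivAt h d p) (hfix : h p = p)
    (ε : ℝ) (hε : 0 < ε) :
    ∃ r > 0, ∀ y : ℝ, |y - p| < r → |h y - p - d * (y - p)| ≤ ε * |y - p| := by
  have h1 := Asymptotics.IsLittleO.def (hasDerivAt_iff_isLittleO.1 hd) hε
  rw [Metric.eventually_nhds_iff] at h1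
  obtain ⟨r, hr, hball⟩ := h1
  refine ⟨r, hr, fun y hy => ?_⟩
  have := hball (show dist y p < r by rwa [Real.dist_eq])
  simpa [hfix, Real.norm_eq_abs, mul_comm, abs_sub_comm] using this

/-- A fixed point where the derivative has absolute value `< 1` is attracting. -/
lemma attract_of_deriv (h : ℝ → ℝ) (p d : ℝ) (hd : HasDerivAt h d p)
    (hfix : h p = p) (hlt : |d| < 1) : IsAttractingFixedPt h p := by
  set c : ℝ := (|d| + 1) / 2 with hc
  have hc0 : 0 ≤ c := by positivity
  have hc1 : c < 1 := by rw [hc]; linarith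
  have hε : (0:ℝ) < (1 - |d|) / 2 := by linarith
  obtain ⟨r, hr, hest⟩ := deriv_est h p d hd hfix _ hε
  have key : ∀ y : ℝ, |y - p| < r → |h y - p| ≤ c * |y - p| := by
    intro y hy
    have h1 := hest y hy
    have h2 : |h y - p| ≤ |d * (y - p)| + |h y - p - d * (y - p)| := by
      have h3 := abs_add_le (d * (y - p)) (h y - p - d * (y - p))
      simpa using h3
    rw [abs_mul] at h2
    calc |h y - p| ≤ |d| * |y - p| + (1 - |d|) / 2 * |y - p| := le_trans h2 (by linarith)
      _ = c * |y - p| := by ring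
  refine ⟨Metric.ball p r, Metric.isOpen_ball, Metric.mem_ball_self hr, ?_⟩
  rintro y ⟨hyU, -⟩
  have hiter : ∀ n : ℕ, |h^[n] y - p| ≤ c ^ n * |y - p| ∧ h^[n] y ∈ Metric.ball p r := by
    intro n
    induction n with
    | zero => simpa using hyU
    | succ n ih =>
      obtain ⟨ih1, ih2⟩ := ih
      rw [Metric.mem_ball, Real.dist_eq] at ih2
      have h1 := key _ ih2
      rw [Function.iterate_succ_apply']
      constructor
      · calc |h (h^[n] y) - p| ≤ c * |h^[n] y - p| := h1
          _ ≤ c * (c ^ n * |y - p|) := mul_le_mul_of_nonneg_left ih1 hc0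
          _ = c ^ (n + 1) * |y - p| := by ring
      · rw [Metric.mem_ball, Real.dist_eq]
        calc |h (h^[n] y) - p| ≤ c * |h^[n] y - p| := h1
          _ ≤ 1 * |h^[n] y - p| := mul_le_mul_of_nonneg_right hc1.le (abs_nonneg _)
          _ < r := by simpa using ih2
  rw [tendsto_iff_dist_tendsto_zero]
  have hlim : Tendsto (fun n : ℕ => c ^ n * |y - p|) atTop (nhds 0) := by
    simpa using (tendsto_pow_atTop_nhds_zero_of_lt_one hc0 hc1).mul_const |y - p|
  refine squeeze_zero (fun n => dist_nonneg) (fun n => ?_) hlim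
  rw [Real.dist_eq]; exact (hiter n).1

/-- A fixed point where the derivative has absolute value `> 1` is repelling. -/
lemma repel_of_deriv (h : ℝ → ℝ) (p d : ℝ) (hd : HasDerivAt h d p)
    (hfix : h p = p) (hgt : 1 < |d|) : IsRepellingFixedPt h p := by
  set c : ℝ := (|d| + 1) / 2 with hc
  have hc1 : 1 < c := by rw [hc]; linarith
  have hε : (0:ℝ) < (|d| - 1) / 2 := by linarith
  obtain ⟨r, hr, hest⟩ := deriv_est h p d hd hfix _ hε
  have key : ∀ y : ℝ, |y - p| < r → c * |y - p| ≤ |h y - p| := by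
    intro y hy
    have h1 := hest y hy
    have h2 : |d * (y - p)| - |h y - p - d * (y - p)| ≤ |h y - p| := by
      have := abs_sub_abs_le_abs_sub (d * (y - p)) (h y - p)
      have h3 : |d * (y - p) - (h y - p)| = |h y - p - d * (y - p)| := abs_sub_comm _ _
      linarith [abs_sub_abs_le_abs_sub (d * (y - p)) (h y - p), h3 ▸ this]
    rw [abs_mul] at h2
    calc c * |y - p| = |d| * |y - p| - (|d| - 1) / 2 * |y - p| := by ring
      _ ≤ |d| * |y - p| - |h y - p - d * (y - p)| := by linarith
      _ ≤ |h y - p| := h2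
  refine ⟨Metric.ball p r, Metric.isOpen_ball, Metric.mem_ball_self hr, ?_⟩
  rintro y ⟨hyU, -⟩ hyp
  by_contra hcon
  push_neg at hcon
  have hall : ∀ n : ℕ, h^[n] y ∈ Metric.ball p r := hcon
  have hiter : ∀ n : ℕ, c ^ n * |y - p| ≤ |h^[n] y - p| := by
    intro n
    induction n with
    | zero => simp
    | succ n ih =>
      have h2 := hall n
      rw [Metric.mem_ball, Real.dist_eq] at h2
      rw [Function.iterate_succ_apply']
      calc c ^ (n+1) * |y - p| = c * (c ^ n * |y - p|) := by ring
        _ ≤ c * |h^[n] y - p| := mul_le_mul_of_nonneg_left ih (by linarith)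
        _ ≤ |h (h^[n] y) - p| := key _ h2
  have hy0 : 0 < |y - p| := abs_pos.2 (sub_ne_zero.2 hyp)
  obtain ⟨n, hn⟩ := pow_unbounded_of_one_lt (r / |y - p|) hc1
  have h5 := hall n
  rw [Metric.mem_ball, Real.dist_eq] at h5
  have h6 : r < c ^ n * |y - p| := by rwa [div_lt_iff₀ hy0] at hn
  linarith [hiter n]

/-- Fix `q ∈ (0,1)` and `δ > 0`, and let
`h x = x / (x + (1−x) exp(δ(x−q)))` for `x ∈ [0,1]`.  Then:
(i) `h` maps `[0,1]` into `[0,1]` and its fixed points there are exactly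
`{0, q, 1}`;
(ii) `h'(0) = exp(δq) > 1` and `h'(1) = exp(δ(1−q)) > 1`, so `0` and `1` are
repelling for every `δ > 0`;
(iii) `h'(q) = δq² − δq + 1`, so `q` is attracting when `δ < 2/(q(1−q))` and
repelling when `δ > 2/(q(1−q))`. -/
theorem ew_fixedPoints_and_stability (q δ : ℝ) (hq : q ∈ Set.Ioo (0:ℝ) 1) (hδ : 0 < δ)
    (h : ℝ → ℝ)
    (hh : ∀ x : ℝ, h x = x / (x + (1 - x) * Real.exp (δ * (x - q)))) :
    (Set.MapsTo h (Set.Icc (0:ℝ) 1) (Set.Icc (0:ℝ) 1) ∧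
     {x ∈ Set.Icc (0:ℝ) 1 | h x = x} = {0, q, 1}) ∧
    (HasDerivAt h (Real.exp (δ * q)) 0 ∧ 1 < Real.exp (δ * q) ∧
     HasDerivAt h (Real.exp (δ * (1 - q))) 1 ∧ 1 < Real.exp (δ * (1 - q)) ∧
     IsRepellingFixedPt h 0 ∧ IsRepellingFixedPt h 1) ∧
    (HasDerivAt h (δ * q ^ 2 - δ * q + 1) q ∧
     (δ < 2 / (q * (1 - q)) → IsAttractingFixedPt h q) ∧
     (2 / (q * (1 - q)) < δ → IsRepellingFixedPt h q)) := by
  obtain ⟨hq0, hq1⟩ := hq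
  set E : ℝ → ℝ := fun x => Real.exp (δ * (x - q)) with hE
  set g : ℝ → ℝ := fun x => x + (1 - x) * E x with hgdef
  have hEpos : ∀ x, 0 < E x := fun x => Real.exp_pos _
  have hhg : ∀ x, h x = x / g x := fun x => by simp [hh x, hgdef, hE]
  have hgpos : ∀ x ∈ Set.Icc (0:ℝ) 1, 0 < g x := by
    rintro x ⟨hx0, hx1⟩
    rcases eq_or_lt_of_le hx0 with h0 | h0
    · simp [hgdef, ← h0, hEpos]
    · have : 0 ≤ (1 - x) * E x := mul_nonneg (by linarith) (hEpos x).le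
      simp only [hgdef]; linarith
  -- derivatives
  have hEderiv : ∀ x, HasDerivAt E (E x * δ) x := by
    intro x
    have h1 : HasDerivAt (fun t : ℝ => δ * (t - q)) δ x := by
      simpa using ((hasDerivAt_id x).sub_const q).const_mul δ
    exact (Real.hasDerivAt_exp (δ * (x - q))).comp x h1
  have hgderiv : ∀ x, HasDerivAt g (1 + ((-1) * E x + (1 - x) * (E x * δ))) x := by
    intro x
    have h2 : HasDerivAt (fun t : ℝ => (1 - t)) (-1) x := by
      simpa using ((hasDerivAt_id x).const_sub 1)
    exact (hasDerivAt_id x).add (h2.mul (hEderiv x))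
  have hhderiv : ∀ x, g x ≠ 0 →
      HasDerivAt h ((1 * g x - x * (1 + ((-1) * E x + (1 - x) * (E x * δ)))) / (g x) ^ 2) x := by
    intro x hgx
    have := (hasDerivAt_id x).div (hgderiv x) hgx
    have heq : h = fun t => t / g t := funext hhg
    rw [heq]; exact this
  have hEq : E q = 1 := by simp [hE]
  have hgq : g q = 1 := by simp [hgdef, hEq]
  have hg1 : g 1 = 1 := by simp [hgdef]
  have hg0 : g 0 = E 0 := by simp [hgdef]
  have hE0 : E 0 = Real.exp (-(δ * q)) := by simp [hE, mul_comm]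
  have hd0 : HasDerivAt h (Real.exp (δ * q)) 0 := by
    have := hhderiv 0 (by rw [hg0]; exact (hEpos 0).ne')
    convert this using 1
    rw [hg0, hE0, Real.exp_neg]
    field_simp
    ring
  have hd1 : HasDerivAt h (Real.exp (δ * (1 - q))) 1 := by
    have := hhderiv 1 (by rw [hg1]; norm_num)
    convert this using 1
    have : E 1 = Real.exp (δ * (1 - q)) := by simp [hE]
    rw [hg1, ← this]; ring
  have hdq : HasDerivAt h (δ * q ^ 2 - δ * q + 1) q := by
    have := hhderiv q (by rw [hgq]; norm_num)
    convert this using 1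
    rw [hgq, hEq]; ring
  -- fixed points
  have hfix0 : h 0 = 0 := by rw [hhg]; simp
  have hfixq : h q = q := by rw [hhg, hgq]; simp
  have hfix1 : h 1 = 1 := by rw [hhg, hg1]; simp
  have hmaps : Set.MapsTo h (Set.Icc (0:ℝ) 1) (Set.Icc (0:ℝ) 1) := by
    intro x hx
    have hg := hgpos x hx
    obtain ⟨hx0, hx1⟩ := hx
    rw [Set.mem_Icc, hhg]
    constructor
    · exact div_nonneg hx0 hg.le
    · rw [div_le_one hg]
      have : 0 ≤ (1 - x) * E x := mul_nonneg (by linarith) (hEpos x).le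
      simp only [hgdef]; linarith
  have hfixset : {x ∈ Set.Icc (0:ℝ) 1 | h x = x} = {0, q, 1} := by
    ext x
    simp only [Set.mem_setOf_eq, Set.mem_insert_iff, Set.mem_singleton_iff]
    constructor
    · rintro ⟨hx, hfx⟩
      have hg := hgpos x hx
      rw [hhg] at hfx
      have h1 : x = x * g x := (div_eq_iff hg.ne').1 hfx
      have h2 : x * ((1 - x) * (E x - 1)) = 0 := by
        simp only [hgdef] at h1
        linear_combination (-1 : ℝ) * h1
      rcases mul_eq_zero.1 h2 with h3 | h3
      · exact Or.inl h3
      rcases mul_eq_zero.1 h3 with h4 | h4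
      · exact Or.inr (Or.inr (by linarith))
      · have h5 : E x = 1 := by linarith
        have h6 : δ * (x - q) = 0 := by
          rwa [hE, Real.exp_eq_one_iff] at h5
        have h7 : x - q = 0 := by
          rcases mul_eq_zero.1 h6 with h | h
          · exact absurd h hδ.ne'
          · exact h
        exact Or.inr (Or.inl (by linarith))
    · rintro (rfl | rfl | rfl)
      · exact ⟨by norm_num, hfix0⟩
      · exact ⟨⟨hq0.le, hq1.le⟩, hfixq⟩
      · exact ⟨by norm_num, hfix1⟩
  -- exponential inequalities
  have hexp0 : 1 < Real.exp (δ * q) := by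
    rw [show (1:ℝ) = Real.exp 0 from Real.exp_zero.symm]
    exact Real.exp_lt_exp.2 (by positivity)
  have hexp1 : 1 < Real.exp (δ * (1 - q)) := by
    have hx : 0 < δ * (1 - q) := by nlinarith
    nlinarith [Real.add_one_le_exp (δ * (1 - q))]
  have hA : 0 < q * (1 - q) := by nlinarith
  refine ⟨⟨hmaps, hfixset⟩,
    ⟨hd0, hexp0, hd1, hexp1,
      repel_of_deriv h 0 _ hd0 hfix0 (by rwa [abs_of_pos (Real.exp_pos _)]),
      repel_of_deriv h 1 _ hd1 hfix1 (by rwa [abs_of_pos (Real.exp_pos _)])⟩,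
    ⟨hdq, ?_, ?_⟩⟩
  · intro hlt
    have h2 : δ * (q * (1 - q)) < 2 := by
      have := (lt_div_iff₀ hA).1 hlt
      linarith
    refine attract_of_deriv h q _ hdq hfixq (abs_lt.2 ⟨by nlinarith, by nlinarith⟩)
  · intro hgt
    have h2 : 2 < δ * (q * (1 - q)) := by
      have := (div_lt_iff₀ hA).1 hgt
      linarith
    refine repel_of_deriv h q _ hdq hfixq ?_
    have hd : δ * q ^ 2 - δ * q + 1 < -1 := by nlinarith
    calc (1:ℝ) < -(δ * q ^ 2 - δ * q + 1) := by linarith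
      _ ≤ |δ * q ^ 2 - δ * q + 1| := neg_le_abs _
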